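/- Let n ≥ 3 be an odd integer, let m ≥ 2 be an integer, and let x, y be integers with y ≥ 1 satisfying x^n − m·y^n = 1 or x^n − m·y^n = −1. Then |x − m^{1/n}·y| ≤ 1/(c₁·y^{n−1}), where c₁ = m^{(n−1)/n}·c₂ and c₂ = ∏_{j=1}^{n−1} |sin(2πj/n)|. -/

import Mathlib

open Finset Real Complex Polynomial

/-- For an odd integer `n ≥ 3`, an integer `m ≥ 2`, and integers
`x, y` with `y ≥ 1` satisfying `x^n − m·y^n = ±1`, one has
`|x − m^{1/n}·y| ≤ 1/(c₁·y^{n−1})` with `c₁ = m^{(n−1)/n}·∏_{j=1}^{n−1}|sin(2πj/n)|`. -/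
theorem stmt_1 (n : ℕ) (hn : 3 ≤ n) (hodd : Odd n) (m : ℤ) (hm : 2 ≤ m)
    (x y : ℤ) (hy : 1 ≤ y)
    (h : x ^ n - m * y ^ n = 1 ∨ x ^ n - m * y ^ n = -1) :
    |(x : ℝ) - (m : ℝ) ^ ((1 : ℝ) / n) * (y : ℝ)| ≤
      1 / (((m : ℝ) ^ (((n : ℝ) - 1) / n) *
        ∏ j ∈ Finset.Icc 1 (n - 1), |Real.sin (2 * Real.pi * (j : ℝ) / n)|) *
        (y : ℝ) ^ (n - 1)) := by
  have hn0 : 0 < n := by omega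
  have hnR : (0:ℝ) < n := by exact_mod_cast hn0
  have hmR : (0:ℝ) < (m:ℝ) := by exact_mod_cast lt_of_lt_of_le two_pos hm
  have hyR : (0:ℝ) < (y:ℝ) := by exact_mod_cast hy
  set α : ℝ := (m:ℝ) ^ ((1:ℝ)/n) with hαdef
  have hα0 : 0 < α := Real.rpow_pos_of_pos hmR _
  have hαn : α ^ n = (m:ℝ) := by
    rw [hαdef, ← Real.rpow_natCast ((m:ℝ) ^ ((1:ℝ)/n)) n, ← Real.rpow_mul hmR.le]
    rw [one_div_mul_cancel hnR.ne', Real.rpow_one]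
  set β : ℝ := α * (y:ℝ) with hβdef
  have hβ0 : 0 < β := mul_pos hα0 hyR
  have hβn : (β:ℝ) ^ n = (m:ℝ) * (y:ℝ) ^ n := by rw [hβdef, mul_pow, hαn]
  -- primitive root
  set ζ : ℂ := Complex.exp (2 * Real.pi * Complex.I / n) with hζdef
  have hζ : IsPrimitiveRoot ζ n := Complex.isPrimitiveRoot_exp n hn0.ne'
  -- factorization
  have hfac : ((x:ℂ)) ^ n - ((m:ℝ) * (y:ℝ)^n : ℝ) =
      ∏ i ∈ Finset.range n, ((x:ℂ) - ζ ^ i * (β:ℂ)) := by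
    have e : (β:ℂ) ^ n = ((m:ℝ) * (y:ℝ)^n : ℝ) := by
      rw [← Complex.ofReal_pow, hβn]
    have := X_pow_sub_C_eq_prod hζ hn0 e
    have := congrArg (Polynomial.eval (x:ℂ)) this
    simpa [Polynomial.eval_prod] using this
  -- the absolute value of lhs is 1
  have habs1 : ‖(x:ℂ) ^ n - ((m:ℝ) * (y:ℝ)^n : ℝ)‖ = 1 := by
    have : ((x:ℂ)) ^ n - ((m:ℝ) * (y:ℝ)^n : ℝ) = ((x ^ n - m * y ^ n : ℤ) : ℂ) := by
      push_cast; ring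
    rw [this]
    rcases h with h | h <;> rw [h] <;> simp
  rw [hfac] at habs1
  rw [norm_prod] at habs1
  -- split off i = 0
  have hsplit : ∏ i ∈ Finset.range n, ‖(x:ℂ) - ζ ^ i * (β:ℂ)‖ =
      ‖(x:ℂ) - (β:ℂ)‖ *
        ∏ j ∈ Finset.Icc 1 (n-1), ‖(x:ℂ) - ζ ^ j * (β:ℂ)‖ := by
    have hr : Finset.range n = insert 0 (Finset.Icc 1 (n-1)) := by
      ext i; simp [Finset.mem_range, Finset.mem_Icc]; omega
    rw [hr, Finset.prod_insert (by simp)]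
    simp
  rw [hsplit] at habs1
  -- lower bound each factor
  have hfactor : ∀ j ∈ Finset.Icc 1 (n-1),
      |Real.sin (2 * Real.pi * (j:ℝ) / n)| * β ≤ ‖(x:ℂ) - ζ ^ j * (β:ℂ)‖ := by
    intro j hj
    have him : ((x:ℂ) - ζ ^ j * (β:ℂ)).im = -(Real.sin (2 * Real.pi * (j:ℝ) / n) * β) := by
      have hzj : ζ ^ j = Complex.exp (((2 * Real.pi * (j:ℝ) / n : ℝ) : ℂ) * Complex.I) := by
        rw [hζdef, ← Complex.exp_nat_mul]
        congr 1
        push_cast; ring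
      have him2 : (ζ ^ j).im = Real.sin (2 * Real.pi * (j:ℝ) / n) := by
        rw [hzj, Complex.exp_ofReal_mul_I_im]
      have : ((x:ℂ) - ζ ^ j * (β:ℂ)).im = -((ζ ^ j).im * β) := by
        simp [Complex.sub_im, Complex.mul_im]
      rw [this, him2]
    calc |Real.sin (2 * Real.pi * (j:ℝ) / n)| * β
        = |((x:ℂ) - ζ ^ j * (β:ℂ)).im| := by
          rw [him, abs_neg, abs_mul, abs_of_pos hβ0]
      _ ≤ ‖(x:ℂ) - ζ ^ j * (β:ℂ)‖ := Complex.abs_im_le_norm _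
  -- product lower bound
  have hcard : (Finset.Icc 1 (n-1)).card = n - 1 := by
    rw [Nat.card_Icc]; omega
  have hprodlb : ((m:ℝ) ^ (((n:ℝ)-1)/n) *
      ∏ j ∈ Finset.Icc 1 (n-1), |Real.sin (2 * Real.pi * (j:ℝ) / n)|) * (y:ℝ) ^ (n-1)
        ≤ ∏ j ∈ Finset.Icc 1 (n-1), ‖(x:ℂ) - ζ ^ j * (β:ℂ)‖ := by
    have h1 : ∏ j ∈ Finset.Icc 1 (n-1), (|Real.sin (2 * Real.pi * (j:ℝ) / n)| * β)
        ≤ ∏ j ∈ Finset.Icc 1 (n-1), ‖(x:ℂ) - ζ ^ j * (β:ℂ)‖ :=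
      Finset.prod_le_prod (fun j _ => by positivity) hfactor
    have h2 : ∏ j ∈ Finset.Icc 1 (n-1), (|Real.sin (2 * Real.pi * (j:ℝ) / n)| * β)
        = (∏ j ∈ Finset.Icc 1 (n-1), |Real.sin (2 * Real.pi * (j:ℝ) / n)|) * β ^ (n-1) := by
      rw [Finset.prod_mul_distrib, Finset.prod_const, hcard]
    have h3 : α ^ (n-1) = (m:ℝ) ^ (((n:ℝ)-1)/n) := by
      rw [hαdef, ← Real.rpow_natCast ((m:ℝ) ^ ((1:ℝ)/n)) (n-1), ← Real.rpow_mul hmR.le]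
      congr 1
      rw [Nat.cast_sub hn0, Nat.cast_one]
      field_simp
    calc ((m:ℝ) ^ (((n:ℝ)-1)/n) *
        ∏ j ∈ Finset.Icc 1 (n-1), |Real.sin (2 * Real.pi * (j:ℝ) / n)|) * (y:ℝ) ^ (n-1)
        = ∏ j ∈ Finset.Icc 1 (n-1), (|Real.sin (2 * Real.pi * (j:ℝ) / n)| * β) := by
          rw [h2, hβdef, mul_pow, ← h3]; ring
      _ ≤ _ := h1
  -- positivity of c₁ y^{n-1}
  have hsinpos : ∀ j ∈ Finset.Icc 1 (n-1), 0 < |Real.sin (2 * Real.pi * (j:ℝ) / n)| := by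
    intro j hj
    rw [Finset.mem_Icc] at hj
    rw [abs_pos]
    intro hs
    rw [Real.sin_eq_zero_iff] at hs
    obtain ⟨k, hk⟩ := hs
    have hkn : (k:ℝ) * (n:ℝ) = 2 * (j:ℝ) := by
      have hπ := Real.pi_ne_zero
      field_simp at hk
      nlinarith [Real.pi_pos]
    have hkn' : k * (n:ℤ) = 2 * (j:ℤ) := by exact_mod_cast hkn
    have hnZ : (3:ℤ) ≤ (n:ℤ) := by exact_mod_cast hn
    have hj1 : (1:ℤ) ≤ (j:ℤ) := by exact_mod_cast hj.1
    have hj2 : (j:ℤ) ≤ (n:ℤ) - 1 := by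
      have := hj.2; omega
    have hk1 : k = 1 := by
      rcases le_or_gt k 0 with hk | hk
      · exfalso; nlinarith
      rcases le_or_gt 2 k with hk2 | hk2
      · exfalso; nlinarith
      omega
    rw [hk1, one_mul] at hkn'
    obtain ⟨t, ht⟩ := hodd
    omega
  have hC : 0 < ((m:ℝ) ^ (((n:ℝ)-1)/n) *
      ∏ j ∈ Finset.Icc 1 (n-1), |Real.sin (2 * Real.pi * (j:ℝ) / n)|) * (y:ℝ) ^ (n-1) := by
    apply mul_pos (mul_pos (Real.rpow_pos_of_pos hmR _) (Finset.prod_pos hsinpos))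
    positivity
  have hP : 0 < ∏ j ∈ Finset.Icc 1 (n-1), ‖(x:ℂ) - ζ ^ j * (β:ℂ)‖ :=
    lt_of_lt_of_le hC hprodlb
  have hA : ‖(x:ℂ) - (β:ℂ)‖ =
      1 / ∏ j ∈ Finset.Icc 1 (n-1), ‖(x:ℂ) - ζ ^ j * (β:ℂ)‖ := by
    rw [eq_div_iff hP.ne']
    linarith [habs1]
  have hAB : ‖(x:ℂ) - (β:ℂ)‖ = |(x:ℝ) - α * (y:ℝ)| := by
    have : (x:ℂ) - (β:ℂ) = (((x:ℝ) - α * (y:ℝ) : ℝ) : ℂ) := by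
      rw [hβdef]; push_cast; ring
    rw [this, Complex.norm_real, Real.norm_eq_abs]
  rw [← hAB, hA]
  exact one_div_le_one_div_of_le hC hprodlb
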